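/- Let (X,d,μ) be a space of homogeneous type with open balls and E ⊆ X non-empty. If d(·,E)^{-α} ∈ A₁(X,d,μ) for some α > 0, then ρ_{d,E}(B) > 0 for every d-ball B, and μ(closure(E)) = 0. -/

import Mathlib

open MeasureTheory ENNReal Set

namespace WPA1

variable {X : Type*}

/-- `d` is a quasi-distance on `X` with triangular constant `K`. -/
def QD (d : X → X → ℝ) (K : ℝ) : Prop :=
  1 ≤ K ∧ (∀ x y, 0 ≤ d x y) ∧ (∀ x y, d x y = 0 ↔ x = y) ∧
    (∀ x y, d x y = d y x) ∧ ∀ x y z, d x z ≤ K * (d x y + d y z)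

/-- The `d`-ball of center `x` and radius `r`. -/
def ball (d : X → X → ℝ) (x : X) (r : ℝ) : Set X := {y | d x y < r}

/-- The optimal (least) triangular constant of `d`. -/
noncomputable def Kopt (d : X → X → ℝ) : ℝ := sInf {K | QD d K}

/-- Distance from a point to a set: `d(x,E) = inf_{e ∈ E} d(x,e)`. -/
noncomputable def distE (d : X → X → ℝ) (E : Set X) (x : X) : ℝ :=
  sInf ((d x) '' E)

/-- The maximal `E`-free hole function
`ρ_{d,E}(B_d(x,r)) = sup {0 < s ≤ 2Kr : ∃ y, B_d(y,s) ⊆ B_d(x,r) \ E}`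
(with value `0` when the set is empty, by `Real.sSup` conventions). -/
noncomputable def hole (d : X → X → ℝ) (K : ℝ) (E : Set X) (x : X) (r : ℝ) : ℝ :=
  sSup {s | 0 < s ∧ s ≤ 2 * K * r ∧ ∃ y, ball d y s ⊆ ball d x r \ E}

/-- The maximal hole function `ρ_{d,E}` is doubling with constant `C`. -/
def HoleDoubling (d : X → X → ℝ) (K : ℝ) (E : Set X) (C : ℝ) : Prop :=
  ∀ x r, 0 < r → hole d K E x (2 * r) ≤ C * hole d K E x r

/-- The `d`-balls are open and form neighborhood bases: the ambient topology is
the one induced by the quasi-distance `d`. -/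
def BallsBasis [TopologicalSpace X] (d : X → X → ℝ) : Prop :=
  (∀ x r, IsOpen (ball d x r)) ∧ ∀ x, ∀ U ∈ nhds x, ∃ r > 0, ball d x r ⊆ U

/-- The measure `μ` is doubling (with constant `A`) on `d`-balls, which have
positive finite measure; i.e. `(X,d,μ)` is a space of homogeneous type. -/
def DoublingBalls [MeasurableSpace X] (μ : Measure X) (d : X → X → ℝ) (A : ℝ) : Prop :=
  ∀ x r, 0 < r → 0 < μ (ball d x r) ∧ μ (ball d x r) < ⊤ ∧
    μ (ball d x (2 * r)) ≤ ENNReal.ofReal A * μ (ball d x r)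

/-- `E` is `(σ,γ)`-weakly porous with respect to `d` and `μ`. -/
def WeaklyPorousWith [MeasurableSpace X] (μ : Measure X) (d : X → X → ℝ) (K : ℝ)
    (E : Set X) (σ γ : ℝ) : Prop :=
  ∀ x r, 0 < r → ∃ (n : ℕ) (c : Fin n → X) (ρ : Fin n → ℝ),
    (∀ i j, i ≠ j → Disjoint (ball d (c i) (ρ i)) (ball d (c j) (ρ j))) ∧
    (∀ i, ball d (c i) (ρ i) ⊆ ball d x r \ E) ∧
    (∀ i, γ * hole d K E x r ≤ ρ i) ∧
    (∀ i, ρ i ≤ 2 * K * r) ∧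
    ENNReal.ofReal σ * μ (ball d x r) ≤ ∑ i, μ (ball d (c i) (ρ i))

/-- `E` is weakly porous with respect to `d` and `μ`. -/
def WeaklyPorous [MeasurableSpace X] (μ : Measure X) (d : X → X → ℝ) (K : ℝ)
    (E : Set X) : Prop :=
  ∃ σ γ : ℝ, σ ∈ Set.Ioo (0:ℝ) 1 ∧ γ ∈ Set.Ioo (0:ℝ) 1 ∧ WeaklyPorousWith μ d K E σ γ

/-- The weight `d(·,E)^{-α}`, valued in `ℝ≥0∞` (so it is `∞` on `{d(·,E)=0}`). -/
noncomputable def wgt (d : X → X → ℝ) (E : Set X) (α : ℝ) (x : X) : ℝ≥0∞ :=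
  ENNReal.ofReal (distE d E x) ^ (-α)

/-- `w` is an `A₁(X,d,μ)`-weight: `w` is locally integrable and the mean value of `w`
over every `d`-ball is bounded by a constant times its essential infimum there. -/
def MemA1 [MeasurableSpace X] (μ : Measure X) (d : X → X → ℝ) (w : X → ℝ≥0∞) : Prop :=
  (∀ x r, 0 < r → ∫⁻ y in ball d x r, w y ∂μ < ⊤) ∧
  ∃ C : ℝ, 0 < C ∧ ∀ x r, 0 < r →
    ∫⁻ y in ball d x r, w y ∂μ ≤
      ENNReal.ofReal C * essInf w (μ.restrict (ball d x r)) * μ (ball d x r)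


/-- If `d(·,E)^{-α} ∈ A₁(X,d,μ)` for some `α > 0`, then `ρ_{d,E}(B) > 0` for every
`d`-ball `B`, and `μ(closure E) = 0`. -/
theorem statement9 {X : Type*} [TopologicalSpace X] [MeasurableSpace X] [BorelSpace X]
    (μ : Measure X) (d : X → X → ℝ) (K A : ℝ)
    (hd : QD d K) (hb : BallsBasis d) (hA : DoublingBalls μ d A)
    (E : Set X) (hE : E.Nonempty)
    (α : ℝ) (hα : 0 < α) (hA1 : MemA1 μ d (wgt d E α)) :
    (∀ x r, 0 < r → 0 < hole d K E x r) ∧ μ (closure E) = 0 := by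

  obtain ⟨hK, hd0, hdeq, hdsymm, hdtri⟩ := hd
  obtain ⟨hopen, hbasis⟩ := hb
  obtain ⟨e, he⟩ := hE
  -- distE vanishes on the closure of E
  have hdist0 : ∀ y ∈ closure E, distE d E y = 0 := by
    intro y hy
    have hne : ((d y) '' E).Nonempty := ⟨_, mem_image_of_mem _ he⟩
    have hbdd : BddBelow ((d y) '' E) := ⟨0, by rintro t ⟨z, -, rfl⟩; exact hd0 y z⟩
    have hlt : ∀ ε > (0:ℝ), distE d E y < ε := by
      intro ε hε
      have hyb : y ∈ ball d y ε := by simp [ball, (hdeq y y).mpr rfl, hε]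
      obtain ⟨z, hz1, hz2⟩ := mem_closure_iff.mp hy (ball d y ε) (hopen y ε) hyb
      exact lt_of_le_of_lt (csInf_le hbdd ⟨z, hz2, rfl⟩) hz1
    have h0 : 0 ≤ distE d E y := le_csInf hne (by rintro t ⟨z, -, rfl⟩; exact hd0 y z)
    by_contra h
    have hp : 0 < distE d E y := lt_of_le_of_ne h0 (Ne.symm h)
    exact absurd (hlt _ hp) (lt_irrefl _)
  -- the closure of E is null inside every ball
  have hnull : ∀ x r, 0 < r → μ (closure E ∩ ball d x r) = 0 := by
    intro x r hr
    have hfin := hA1.1 x r hr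
    have hmeas : MeasurableSet (closure E ∩ ball d x r) :=
      measurableSet_closure.inter (hopen x r).measurableSet
    have hmono : ∫⁻ y in closure E ∩ ball d x r, wgt d E α y ∂μ ≤
        ∫⁻ y in ball d x r, wgt d E α y ∂μ := lintegral_mono_set inter_subset_right
    have heq : ∫⁻ y in closure E ∩ ball d x r, wgt d E α y ∂μ =
        ⊤ * μ (closure E ∩ ball d x r) := by
      have hw : ∀ᵐ y ∂μ, y ∈ closure E ∩ ball d x r → wgt d E α y = ⊤ := by
        refine ae_of_all _ fun y hy => ?_
        unfold wgt
        rw [hdist0 y hy.1, ENNReal.ofReal_zero, ENNReal.zero_rpow_of_neg (by linarith)]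
      rw [setLIntegral_congr_fun_ae hmeas hw, setLIntegral_const]
    by_contra h
    rw [heq, ENNReal.top_mul h] at hmono
    exact absurd (lt_of_le_of_lt hmono hfin) (lt_irrefl _)
  constructor
  · intro x r hr
    have hball := (hA x r hr).1
    have hsub : ¬ ball d x r ⊆ closure E := by
      intro h
      have := measure_mono (μ := μ) (subset_inter h (subset_refl (ball d x r)))
      rw [hnull x r hr] at this
      exact absurd (lt_of_lt_of_le hball this) (lt_irrefl _)
    obtain ⟨z, hz, hzc⟩ := not_subset.mp hsub
    obtain ⟨s₀, hs₀, hsub₀⟩ := hbasis z ((closure E)ᶜ)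
      (isClosed_closure.isOpen_compl.mem_nhds hzc)
    obtain ⟨s₁, hs₁, hsub₁⟩ := hbasis z (ball d x r) ((hopen x r).mem_nhds hz)
    have h2Kr : 0 < 2 * K * r := by nlinarith
    set s := min (min s₀ s₁) (2 * K * r) with hs_def
    have hspos : 0 < s := lt_min (lt_min hs₀ hs₁) h2Kr
    have hmem : s ∈ {s | 0 < s ∧ s ≤ 2 * K * r ∧ ∃ y, ball d y s ⊆ ball d x r \ E} := by
      refine ⟨hspos, min_le_right _ _, z, fun y hy => ?_⟩
      have hy0 : d z y < s₀ := lt_of_lt_of_le hy (le_trans (min_le_left _ _) (min_le_left _ _))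
      have hy1 : d z y < s₁ := lt_of_lt_of_le hy (le_trans (min_le_left _ _) (min_le_right _ _))
      exact ⟨hsub₁ hy1, fun hyE => hsub₀ hy0 (subset_closure hyE)⟩
    have hbdd : BddAbove {s | 0 < s ∧ s ≤ 2 * K * r ∧ ∃ y, ball d y s ⊆ ball d x r \ E} :=
      ⟨2 * K * r, fun t ht => ht.2.1⟩
    exact lt_of_lt_of_le hspos (le_csSup hbdd hmem)
  · have hcov : closure E ⊆ ⋃ n : ℕ, closure E ∩ ball d e ((n : ℝ) + 1) := by
      intro y hy
      refine mem_iUnion.mpr ⟨⌈d e y⌉₊, hy, ?_⟩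
      show d e y < (⌈d e y⌉₊ : ℝ) + 1
      exact lt_of_le_of_lt (Nat.le_ceil _) (by linarith)
    exact measure_mono_null hcov (measure_iUnion_null fun n => hnull e _ (by positivity))

end WPA1
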